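/- Let t ≥ 0 and let ρ be a complex root of x^5 + t x^3 + 1. Then ρ ≠ 0 and ρ^5 is not a positive real number; in particular the argument of ρ is not an integer multiple of 2π/5. -/

import Mathlib

theorem stmt_9 (t : ℝ) (ht : 0 ≤ t) (ρ : ℂ)
    (hρ : ρ ^ 5 + (t : ℂ) * ρ ^ 3 + 1 = 0) :
    ρ ≠ 0 ∧ ¬((ρ ^ 5).im = 0 ∧ 0 < (ρ ^ 5).re) ∧
    ∀ k : ℤ, ρ.arg ≠ k * (2 * Real.pi / 5) := by
  have hρ0 : ρ ≠ 0 := by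
    intro h; rw [h] at hρ; simp at hρ
  have key : ¬((ρ ^ 5).im = 0 ∧ 0 < (ρ ^ 5).re) := by
    rintro ⟨him, hre⟩
    set s := (ρ ^ 5).re with hs
    have h5 : ρ ^ 5 = (s : ℂ) := by
      apply Complex.ext
      · simp [hs]
      · simpa using him
    rcases eq_or_lt_of_le ht with ht0 | ht0
    · rw [← ht0] at hρ
      push_cast at hρ
      have h1 : (s : ℂ) = -1 := by rw [← h5]; linear_combination hρ
      have : s = -1 := by exact_mod_cast h1
      linarith
    · have htne : (t : ℂ) ≠ 0 := by exact_mod_cast ht0.ne'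
      have h3 : ρ ^ 3 = ((-(1 + s) / t : ℝ) : ℂ) := by
        push_cast
        field_simp
        linear_combination hρ - h5
      set c : ℝ := -(1 + s) / t with hc
      have hsne : (s : ℂ) ≠ 0 := by exact_mod_cast hre.ne'
      have h6 : ρ * (s : ℂ) = (c : ℂ) ^ 2 := by
        have : ρ * ρ ^ 5 = (ρ ^ 3) ^ 2 := by ring
        rw [h5, h3] at this
        exact this
      have hcneg : c < 0 := by
        rw [hc]
        apply div_neg_of_neg_of_pos _ ht0
        linarith
      have hρeq : ρ = ((c ^ 2 / s : ℝ) : ℂ) := by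
        push_cast
        field_simp
        linear_combination h6
      set r : ℝ := c ^ 2 / s with hr
      have hc2 : 0 < c ^ 2 := by nlinarith
      have hrpos : 0 < r := div_pos hc2 hre
      rw [hρeq] at hρ
      have : ((r ^ 5 + t * r ^ 3 + 1 : ℝ) : ℂ) = 0 := by push_cast; linear_combination hρ
      have hreal : r ^ 5 + t * r ^ 3 + 1 = 0 := by exact_mod_cast this
      nlinarith [pow_pos hrpos 5, pow_pos hrpos 3]
  refine ⟨hρ0, key, ?_⟩
  intro k hk
  apply key
  have habs := Complex.norm_mul_exp_arg_mul_I ρ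
  have hexp : Complex.exp (ρ.arg * Complex.I) ^ 5 = 1 := by
    rw [← Complex.exp_nat_mul]
    rw [show ((5 : ℕ) : ℂ) * (↑ρ.arg * Complex.I) = (k : ℂ) * (2 * Real.pi * Complex.I) by
      rw [hk]; push_cast; ring]
    exact Complex.exp_int_mul_two_pi_mul_I k
  have h5 : ρ ^ 5 = ((‖ρ‖ : ℂ) ^ 5) := by
    conv_lhs => rw [← habs]
    rw [mul_pow, hexp, mul_one]
  rw [h5]
  constructor
  · simp [← Complex.ofReal_pow]
  · simp only [← Complex.ofReal_pow, Complex.ofReal_re]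
    exact pow_pos (norm_pos_iff.mpr hρ0) 5
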